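/- arXiv:2110.01504 — 2 statements merged into one kernel-verified Lean document; each statement's English description precedes it below -/
import Mathlib

section
/- Unique extension for the formal Poisson constraint: for every function ρ : I → ℝ and every function q : I₁ → ℝ, there exists a unique function p : I → ℝ such that p(i) = q(i) for all i ∈ I₁ and Σ_{μ∈M} p(i + 2e_μ) = ρ(i) for all i ∈ I. -/
abbrev MIdx (m : ℕ) := Fin m → ℕ

noncomputable def pExt (m : ℕ) [NeZero m] (ρ : MIdx m → ℝ)
    (q : {i : MIdx m // i 0 ≤ 1} → ℝ) (i : MIdx m) : ℝ :=
  if h : i 0 ≤ 1 then q ⟨i, h⟩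
  else
    ρ (Function.update i 0 (i 0 - 2)) -
      ∑ μ ∈ (Finset.univ.erase (0 : Fin m)).attach,
        pExt m ρ q (Function.update i 0 (i 0 - 2) + Pi.single μ.1 2)
  termination_by i 0
  decreasing_by
    have hμ : μ.1 ≠ 0 := (Finset.mem_erase.mp μ.2).1
    have h0 : (Function.update i 0 (i 0 - 2) + Pi.single μ.1 2 : MIdx m) 0 = i 0 - 2 := by
      simp [Pi.single_eq_of_ne' hμ]
    rw [h0]; omega

lemma pExt_spec (m : ℕ) [NeZero m] (ρ : MIdx m → ℝ)
    (q : {i : MIdx m // i 0 ≤ 1} → ℝ) (i : MIdx m) (h : ¬ i 0 ≤ 1) :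
    pExt m ρ q i = ρ (Function.update i 0 (i 0 - 2)) -
      ∑ μ ∈ Finset.univ.erase (0 : Fin m),
        pExt m ρ q (Function.update i 0 (i 0 - 2) + Pi.single μ 2) := by
  rw [pExt.eq_def, dif_neg h]
  congr 1
  exact Finset.sum_attach _ fun μ => pExt m ρ q (Function.update i 0 (i 0 - 2) + Pi.single μ 2)

lemma key (m : ℕ) [NeZero m] (i : MIdx m) (h : 2 ≤ i 0) :
    Function.update i 0 (i 0 - 2) + Pi.single 0 2 = i := by
  funext ν
  by_cases hν : ν = 0
  · subst hν; simp; omega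
  · simp [Function.update_of_ne hν, Pi.single_eq_of_ne' (Ne.symm hν)]

lemma key2 (m : ℕ) [NeZero m] (i : MIdx m) :
    Function.update (i + Pi.single (0:Fin m) 2 : MIdx m) 0
      ((i + Pi.single (0:Fin m) 2 : MIdx m) 0 - 2) = i := by
  funext ν
  by_cases hν : ν = 0
  · subst hν; simp
  · simp [Function.update_of_ne hν, Pi.single_eq_of_ne' (Ne.symm hν)]

/-- unique extension for the formal Poisson constraint: for every
`ρ : I → ℝ` and `q : I₁ → ℝ` (`I₁ = {i : i¹ ≤ 1}`) there is a unique `p : I → ℝ`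
restricting to `q` on `I₁` and satisfying `Σ_{μ∈M} p(i + 2e_μ) = ρ(i)` for all
`i ∈ I`. -/
theorem statement10 (m : ℕ) [NeZero m] (hm : 2 ≤ m)
    (ρ : MIdx m → ℝ) (q : {i : MIdx m // i 0 ≤ 1} → ℝ) :
    ∃! p : MIdx m → ℝ,
      (∀ (i : MIdx m) (h : i 0 ≤ 1), p i = q ⟨i, h⟩) ∧
      (∀ i : MIdx m, ∑ μ : Fin m, p (i + Pi.single μ 2) = ρ i) := by
  refine ⟨pExt m ρ q, ⟨?_, ?_⟩, ?_⟩
  · intro i h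
    rw [pExt.eq_def, dif_pos h]
  · intro i
    have h2 : ¬ (i + Pi.single (0:Fin m) 2 : MIdx m) 0 ≤ 1 := by simp
    rw [← Finset.add_sum_erase _ _ (Finset.mem_univ (0 : Fin m))]
    have := pExt_spec m ρ q (i + Pi.single (0:Fin m) 2) h2
    rw [key2 m i] at this
    rw [this]
    ring
  · intro p ⟨hq, hρ⟩
    have main : ∀ n : ℕ, ∀ i : MIdx m, i 0 = n → p i = pExt m ρ q i := by
      intro n
      induction n using Nat.strong_induction_on with
      | _ n ih =>
        intro i hn
        by_cases h : i 0 ≤ 1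
        · rw [hq i h, pExt.eq_def, dif_pos h]
        · push_neg at h
          have h2 : 2 ≤ i 0 := h
          set j : MIdx m := Function.update i 0 (i 0 - 2) with hj
          have hsum := hρ j
          rw [← Finset.add_sum_erase _ _ (Finset.mem_univ (0 : Fin m)), key m i h2] at hsum
          have hpi : p i = ρ j - ∑ μ ∈ Finset.univ.erase (0 : Fin m),
              p (j + Pi.single μ 2) := by linarith
          have hrec : ∀ μ ∈ Finset.univ.erase (0 : Fin m),
              p (j + Pi.single μ 2) = pExt m ρ q (j + Pi.single μ 2) := by
            intro μ hμ
            have hμ0 : μ ≠ 0 := (Finset.mem_erase.mp hμ).1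
            have hlt : (j + Pi.single μ 2 : MIdx m) 0 < n := by
              have : (j + Pi.single μ 2 : MIdx m) 0 = i 0 - 2 := by
                simp [hj, Pi.single_eq_of_ne' hμ0]
              omega
            exact ih _ hlt _ rfl
          rw [hpi, Finset.sum_congr rfl hrec, pExt_spec m ρ q i (by omega)]
    funext i
    exact main (i 0) i rfl
end

section
/- Global coordinates on the solution manifold of the continuity and Poisson constraints: for multi-indices k ≤ i define C(i,k) = Π_{ν=1}^{m} binom(i_ν, k_ν). Then the restriction map (u, p) ↦ (u¹|_{I₀}, (u^α)_{α∈N}, p|_{I₁}) is a bijection from the set of pairs of families u = (u^μ)_{μ∈M}, u^μ : I → ℝ, and p : I → ℝ satisfying, for every i ∈ I, both Σ_{μ∈M} u^μ(i + e_μ) = 0 (the continuity constraints CE_i = 0) and Σ_{μ∈M} p(i + 2e_μ) + Σ_{k+l=i} C(i,k) Σ_{λ,μ∈M} u^λ(k + e_μ) u^μ(l + e_λ) = 0 (the Poisson constraints PE_i = 0), onto the product set ℝ^{I₀} × (ℝ^I)^N × ℝ^{I₁}. -/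
/-- The product of binomial coefficients `C(i,k) = Π_ν binom(i_ν, k_ν)`. -/
def multiChoose {m : ℕ} (i k : MIdx m) : ℕ := ∏ ν : Fin m, (i ν).choose (k ν)

section Aux

variable {m : ℕ} [NeZero m]

lemma midx_sub_add (i : MIdx m) (a : ℕ) (h : a ≤ i 0) :
    (i - Pi.single 0 a) + Pi.single 0 a = i := by
  funext ν
  simp only [Pi.add_apply, Pi.sub_apply, Pi.single_apply]
  by_cases hν : ν = 0 <;> simp [hν] <;> omega

lemma midx_add_sub (i : MIdx m) (a : ℕ) :
    (i + Pi.single 0 a) - Pi.single 0 a = i := by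
  funext ν
  simp only [Pi.add_apply, Pi.sub_apply, Pi.single_apply]
  omega

lemma midx_apply_add (i : MIdx m) (μ : Fin m) (hμ : μ ≠ 0) (a : ℕ) :
    (i + Pi.single μ a : MIdx m) 0 = i 0 := by
  simp [Pi.single_apply, Ne.symm hμ]

/-- The quadratic term of the Poisson constraint. -/
def qOf (u : Fin m → MIdx m → ℝ) (i : MIdx m) : ℝ :=
  ∑ k ∈ Finset.Iic i, (multiChoose i k : ℝ) *
    ∑ lam : Fin m, ∑ μ : Fin m,
      u lam (k + Pi.single μ 1) * u μ ((i - k) + Pi.single lam 1)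

/-- Reconstruction of the velocity field from its free coordinates. -/
def buildU (f : {i : MIdx m // i 0 = 0} → ℝ) (g : {α : Fin m // α ≠ 0} → MIdx m → ℝ) :
    Fin m → MIdx m → ℝ := fun μ i =>
  if hμ : μ = 0 then
    if h0 : i 0 = 0 then f ⟨i, h0⟩
    else -∑ α : {α : Fin m // α ≠ 0}, g α ((i - Pi.single 0 1) + Pi.single (α : Fin m) 1)
  else g ⟨μ, hμ⟩ i

/-- Reconstruction of the pressure from its free coordinates. -/
def buildP (q : MIdx m → ℝ) (h : {i : MIdx m // i 0 ≤ 1} → ℝ) (i : MIdx m) : ℝ :=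
  if hi : i 0 ≤ 1 then h ⟨i, hi⟩
  else
    (-∑ μ ∈ (Finset.univ.erase (0 : Fin m)).attach,
        buildP q h ((i - Pi.single 0 2) + Pi.single (μ : Fin m) 2))
      - q (i - Pi.single 0 2)
termination_by i 0
decreasing_by
  have hμ2 : (μ : Fin m) ≠ 0 := (Finset.mem_erase.mp μ.2).1
  simp only [Pi.add_apply, Pi.sub_apply, Pi.single_eq_same, Pi.single_eq_of_ne (Ne.symm hμ2)]
  omega

lemma buildP_add (q : MIdx m → ℝ) (h : {i : MIdx m // i 0 ≤ 1} → ℝ) (i : MIdx m) :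
    buildP q h (i + Pi.single 0 2) =
      (-∑ μ ∈ Finset.univ.erase (0 : Fin m), buildP q h (i + Pi.single μ 2)) - q i := by
  rw [buildP]
  have h0 : ¬ (i + Pi.single 0 2 : MIdx m) 0 ≤ 1 := by simp [Pi.single_apply]
  rw [dif_neg h0, midx_add_sub]
  have hs : ∑ μ ∈ (Finset.univ.erase (0 : Fin m)).attach,
      buildP q h (i + Pi.single (μ : Fin m) 2)
      = ∑ μ ∈ Finset.univ.erase (0 : Fin m), buildP q h (i + Pi.single μ 2) :=
    Finset.sum_attach _ (fun μ => buildP q h (i + Pi.single μ 2))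
  rw [hs]

lemma buildU_ne (f : {i : MIdx m // i 0 = 0} → ℝ) (g : {α : Fin m // α ≠ 0} → MIdx m → ℝ)
    (μ : Fin m) (hμ : μ ≠ 0) : buildU f g μ = g ⟨μ, hμ⟩ := by
  funext i; rw [buildU, dif_neg hμ]

lemma buildU_CE (f : {i : MIdx m // i 0 = 0} → ℝ) (g : {α : Fin m // α ≠ 0} → MIdx m → ℝ)
    (i : MIdx m) :
    ∑ μ : Fin m, buildU f g μ (i + Pi.single μ 1) = 0 := by
  rw [← Finset.add_sum_erase Finset.univ _ (Finset.mem_univ (0 : Fin m))]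
  have h1 : buildU f g 0 (i + Pi.single 0 1) =
      -∑ α : {α : Fin m // α ≠ 0}, g α (i + Pi.single (α : Fin m) 1) := by
    rw [buildU, dif_pos rfl]
    have h0 : ¬ (i + Pi.single 0 1 : MIdx m) 0 = 0 := by simp [Pi.single_apply]
    rw [dif_neg h0, midx_add_sub]
  have h2 : ∑ μ ∈ Finset.univ.erase (0 : Fin m), buildU f g μ (i + Pi.single μ 1)
      = ∑ α : {α : Fin m // α ≠ 0}, g α (i + Pi.single (α : Fin m) 1) := by
    refine (Finset.sum_subtype (p := fun α : Fin m => α ≠ 0) (F := inferInstance)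
      (Finset.univ.erase (0 : Fin m))
      (fun x => by simp [Finset.mem_erase])
      (fun μ => buildU f g μ (i + Pi.single μ 1))).trans ?_
    refine Finset.sum_congr rfl fun α _ => ?_
    rw [buildU, dif_neg α.2]
  rw [h1, h2]; ring

end Aux

/-- global coordinates on the solution manifold of the continuity
and Poisson constraints: the restriction map
`(u, p) ↦ (u¹|_{I₀}, (u^α)_{α∈N}, p|_{I₁})` is a bijection from the set of pairs
satisfying all the constraints `CE_i = 0` and `PE_i = 0` onto
`ℝ^{I₀} × (ℝ^I)^N × ℝ^{I₁}`. -/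
theorem statement11 (m : ℕ) [NeZero m] (hm : 2 ≤ m) :
    Function.Bijective
      (fun Up : {Up : (Fin m → MIdx m → ℝ) × (MIdx m → ℝ) //
          (∀ i : MIdx m, ∑ μ : Fin m, Up.1 μ (i + Pi.single μ 1) = 0) ∧
          (∀ i : MIdx m,
            (∑ μ : Fin m, Up.2 (i + Pi.single μ 2))
              + ∑ k ∈ Finset.Iic i, (multiChoose i k : ℝ) *
                  ∑ lam : Fin m, ∑ μ : Fin m,
                    Up.1 lam (k + Pi.single μ 1) * Up.1 μ ((i - k) + Pi.single lam 1) = 0)} =>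
        ((fun i : {i : MIdx m // i 0 = 0} => Up.1.1 0 i.1,
          fun α : {α : Fin m // α ≠ 0} => Up.1.1 (α : Fin m),
          fun i : {i : MIdx m // i 0 ≤ 1} => Up.1.2 i.1) :
          ({i : MIdx m // i 0 = 0} → ℝ) × ({α : Fin m // α ≠ 0} → MIdx m → ℝ) ×
            ({i : MIdx m // i 0 ≤ 1} → ℝ))) := by
  constructor
  · -- injectivity
    rintro ⟨⟨u1, p1⟩, hC1, hP1⟩ ⟨⟨u2, p2⟩, hC2, hP2⟩ heq
    simp only [Prod.mk.injEq] at heq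
    obtain ⟨hf, hg, hp⟩ := heq
    -- equality of velocities
    have hu : u1 = u2 := by
      have hune : ∀ μ : Fin m, μ ≠ 0 → u1 μ = u2 μ := fun μ hμ =>
        congrFun hg ⟨μ, hμ⟩
      funext μ i
      by_cases hμ : μ = 0
      · subst hμ
        by_cases h0 : i 0 = 0
        · exact congrFun hf ⟨i, h0⟩
        · have hji : (i - Pi.single 0 1) + Pi.single 0 1 = i :=
            midx_sub_add i 1 (by omega)
          set j := i - Pi.single 0 1 with hj
          have e1 := hC1 j
          have e2 := hC2 j
          rw [← Finset.add_sum_erase Finset.univ _ (Finset.mem_univ (0 : Fin m))] at e1 e2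
          rw [hji] at e1 e2
          have hsame : ∑ μ ∈ Finset.univ.erase (0 : Fin m), u1 μ (j + Pi.single μ 1)
              = ∑ μ ∈ Finset.univ.erase (0 : Fin m), u2 μ (j + Pi.single μ 1) := by
            refine Finset.sum_congr rfl fun μ hmem => ?_
            rw [hune μ (Finset.mem_erase.mp hmem).1]
          linarith
      · exact congrFun (hune μ hμ) i
    subst hu
    -- equality of pressures
    have hpp : p1 = p2 := by
      have key : ∀ n : ℕ, ∀ i : MIdx m, i 0 = n → p1 i = p2 i := by
        intro n
        induction n using Nat.strong_induction_on with
        | _ n ih =>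
          intro i hin
          by_cases hi : i 0 ≤ 1
          · exact congrFun hp ⟨i, hi⟩
          · have hji : (i - Pi.single 0 2) + Pi.single 0 2 = i :=
              midx_sub_add i 2 (by omega)
            set j := i - Pi.single 0 2 with hj
            have e1 := hP1 j
            have e2 := hP2 j
            rw [← Finset.add_sum_erase Finset.univ _ (Finset.mem_univ (0 : Fin m))] at e1 e2
            rw [hji] at e1 e2
            have hsame : ∑ μ ∈ Finset.univ.erase (0 : Fin m), p1 (j + Pi.single μ 2)
                = ∑ μ ∈ Finset.univ.erase (0 : Fin m), p2 (j + Pi.single μ 2) := by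
              refine Finset.sum_congr rfl fun μ hmem => ?_
              have hμ : μ ≠ 0 := (Finset.mem_erase.mp hmem).1
              refine ih ((j + Pi.single μ 2 : MIdx m) 0) ?_ _ rfl
              rw [midx_apply_add j μ hμ 2]
              have : j 0 = i 0 - 2 := by simp [hj, Pi.sub_apply, Pi.single_apply]
              omega
            linarith
      funext i; exact key (i 0) i rfl
    subst hpp
    rfl
  · -- surjectivity
    rintro ⟨f, g, h⟩
    refine ⟨⟨⟨buildU f g, buildP (qOf (buildU f g)) h⟩, fun i => buildU_CE f g i,
      fun i => ?_⟩, ?_⟩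
    · -- Poisson constraint holds
      rw [← Finset.add_sum_erase Finset.univ _ (Finset.mem_univ (0 : Fin m))]
      have hb := buildP_add (qOf (buildU f g)) h i
      dsimp only
      rw [hb, qOf]
      ring
    · -- the image equals (f, g, h)
      refine Prod.ext ?_ (Prod.ext ?_ ?_)
      · funext i
        show buildU f g 0 i.1 = f i
        rw [buildU, dif_pos rfl, dif_pos i.2]
      · funext α
        show buildU f g (α : Fin m) = g α
        rw [buildU_ne f g α α.2]
      · funext i
        show buildP (qOf (buildU f g)) h i.1 = h i
        rw [buildP, dif_pos i.2]
end
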